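/- arXiv:1008.2074 — 4 statements merged into one kernel-verified Lean document; each statement's English description precedes it below -/
import Mathlib

section
/- Let I be an ideal in ℤ[x₁,…,xₙ] with I ∩ ℤ = ⟨0⟩. Then there exists a nonzero integer h such that the colon ideal (I : h) equals the contraction of the extension of I to ℚ[x₁,…,xₙ], i.e. (I : h) = (I·ℚ[x₁,…,xₙ]) ∩ ℤ[x₁,…,xₙ], and moreover I = (I : h) ∩ ⟨I, h⟩. -/
open MvPolynomial

private lemma clearDen {n : ℕ} (r : MvPolynomial (Fin n) ℚ) :
    ∃ e : ℤ, e ≠ 0 ∧ ∃ r' : MvPolynomial (Fin n) ℤ,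
      MvPolynomial.map (Int.castRingHom ℚ) r' = C (e : ℚ) * r := by
  induction r using MvPolynomial.induction_on with
  | C a =>
      refine ⟨(a.den : ℤ), Int.natCast_ne_zero.mpr a.den_ne_zero, C a.num, ?_⟩
      rw [map_C, ← C_mul]
      congr 1
      have hden : ((a.den : ℚ)) ≠ 0 := Nat.cast_ne_zero.mpr a.den_ne_zero
      simp only [eq_intCast, Int.cast_natCast]
      have h2 := (div_eq_iff hden).mp (Rat.num_div_den a)
      linarith
  | add p q hp hq =>
      obtain ⟨e1, he1, p', hp'⟩ := hp
      obtain ⟨e2, he2, q', hq'⟩ := hq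
      refine ⟨e1 * e2, mul_ne_zero he1 he2, C e2 * p' + C e1 * q', ?_⟩
      rw [map_add, map_mul, map_mul, map_C, map_C, hp', hq']
      simp only [eq_intCast]
      push_cast [C_mul]
      ring
  | mul_X p i hp =>
      obtain ⟨e, he, p', hp'⟩ := hp
      exact ⟨e, he, p' * X i, by rw [map_mul, MvPolynomial.map_X, hp']; ring⟩

private lemma memMapClear {n : ℕ} (I : Ideal (MvPolynomial (Fin n) ℤ))
    {q : MvPolynomial (Fin n) ℚ}
    (hq : q ∈ Ideal.map (MvPolynomial.map (Int.castRingHom ℚ)) I) :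
    ∃ d : ℤ, d ≠ 0 ∧ ∃ p ∈ I, MvPolynomial.map (Int.castRingHom ℚ) p = C (d : ℚ) * q := by
  have hq' : q ∈ Ideal.span ((MvPolynomial.map (Int.castRingHom ℚ)) '' ↑I) := hq
  clear hq
  induction hq' using Submodule.span_induction with
  | mem x hx =>
      obtain ⟨p, hp, rfl⟩ := hx
      exact ⟨1, one_ne_zero, p, hp, by push_cast; rw [C_1, one_mul]⟩
  | zero => exact ⟨1, one_ne_zero, 0, I.zero_mem, by simp⟩
  | add x y hx hy ihx ihy =>
      obtain ⟨d1, hd1, p1, hp1, he1⟩ := ihx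
      obtain ⟨d2, hd2, p2, hp2, he2⟩ := ihy
      refine ⟨d1 * d2, mul_ne_zero hd1 hd2, C d2 * p1 + C d1 * p2,
        I.add_mem (I.mul_mem_left _ hp1) (I.mul_mem_left _ hp2), ?_⟩
      rw [map_add, map_mul, map_mul, map_C, map_C, he1, he2]
      simp only [eq_intCast]
      push_cast [C_mul]
      ring
  | smul r x hx ihx =>
      obtain ⟨d, hd, p, hp, he⟩ := ihx
      obtain ⟨e, hee, r', hr'⟩ := clearDen (n := n) r
      refine ⟨e * d, mul_ne_zero hee hd, r' * p, I.mul_mem_left _ hp, ?_⟩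
      rw [map_mul, hr', he, smul_eq_mul]
      push_cast [C_mul]
      ring

private lemma mem_contr_iff {n : ℕ} (I : Ideal (MvPolynomial (Fin n) ℤ))
    (f : MvPolynomial (Fin n) ℤ) :
    f ∈ Ideal.comap (MvPolynomial.map (Int.castRingHom ℚ))
        (Ideal.map (MvPolynomial.map (Int.castRingHom ℚ)) I) ↔
      ∃ d : ℤ, d ≠ 0 ∧ C d * f ∈ I := by
  constructor
  · intro hf
    obtain ⟨d, hd, p, hp, he⟩ := memMapClear I (Ideal.mem_comap.mp hf)
    have hpf : p = C d * f := by
      apply MvPolynomial.map_injective (Int.castRingHom ℚ) Int.cast_injective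
      rw [he, map_mul, map_C]
      simp only [eq_intCast]
    exact ⟨d, hd, hpf ▸ hp⟩
  · rintro ⟨d, hd, hdf⟩
    rw [Ideal.mem_comap]
    have h1 : MvPolynomial.map (Int.castRingHom ℚ) (C d * f) ∈
        Ideal.map (MvPolynomial.map (Int.castRingHom ℚ)) I :=
      Ideal.mem_map_of_mem _ hdf
    rw [map_mul, map_C] at h1
    have hd' : ((d : ℚ)) ≠ 0 := Int.cast_ne_zero.mpr hd
    have he : MvPolynomial.map (Int.castRingHom ℚ) f =
        C ((d : ℚ)⁻¹) * (C ((Int.castRingHom ℚ) d) *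
          MvPolynomial.map (Int.castRingHom ℚ) f) := by
      rw [← mul_assoc, ← C_mul]
      simp only [eq_intCast]
      rw [inv_mul_cancel₀ hd']
      simp
    rw [he]
    exact Ideal.mul_mem_left _ _ h1

theorem stmt_0 (n : ℕ) (I : Ideal (MvPolynomial (Fin n) ℤ))
    (hI : ∀ a : ℤ, (C a : MvPolynomial (Fin n) ℤ) ∈ I → a = 0) :
    ∃ h : ℤ, h ≠ 0 ∧
      I.colon (Ideal.span {(C h : MvPolynomial (Fin n) ℤ)}) =
        Ideal.comap (MvPolynomial.map (Int.castRingHom ℚ))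
          (Ideal.map (MvPolynomial.map (Int.castRingHom ℚ)) I) ∧
      I = I.colon (Ideal.span {(C h : MvPolynomial (Fin n) ℤ)}) ⊓
            (I ⊔ Ideal.span {(C h : MvPolynomial (Fin n) ℤ)}) := by
  classical
  obtain ⟨s, hs⟩ : (Ideal.comap (MvPolynomial.map (Int.castRingHom ℚ))
      (Ideal.map (MvPolynomial.map (Int.castRingHom ℚ)) I)).FG :=
    IsNoetherian.noetherian _
  have key : ∀ t : Finset (MvPolynomial (Fin n) ℤ),
      (∀ f ∈ t, ∃ d : ℤ, d ≠ 0 ∧ C d * f ∈ I) →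
      ∃ h : ℤ, h ≠ 0 ∧ ∀ f ∈ t, C h * f ∈ I := by
    intro t
    induction t using Finset.induction_on with
    | empty => exact fun _ => ⟨1, one_ne_zero, by simp⟩
    | @insert a t hat ih =>
        intro hall
        obtain ⟨h, hh, hht⟩ := ih fun f hf => hall f (Finset.mem_insert_of_mem hf)
        obtain ⟨d, hd, hda⟩ := hall a (Finset.mem_insert_self a t)
        refine ⟨d * h, mul_ne_zero hd hh, ?_⟩
        intro f hf
        rcases Finset.mem_insert.mp hf with rfl | hf
        · have e : C (d * h) * f = C h * (C d * f) := by rw [C_mul]; ring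
          rw [e]; exact I.mul_mem_left _ hda
        · have e : C (d * h) * f = C d * (C h * f) := by rw [C_mul]; ring
          rw [e]; exact I.mul_mem_left _ (hht f hf)
  obtain ⟨h, hh, hhs⟩ := key s fun f hf =>
    (mem_contr_iff I f).mp (hs ▸ Ideal.subset_span hf)
  have hcolon : I.colon (Ideal.span {(C h : MvPolynomial (Fin n) ℤ)}) =
      Ideal.comap (MvPolynomial.map (Int.castRingHom ℚ))
        (Ideal.map (MvPolynomial.map (Int.castRingHom ℚ)) I) := by
    apply le_antisymm
    · intro f hf
      have := Ideal.mem_colon_span_singleton.mp hf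
      rw [mul_comm] at this
      exact (mem_contr_iff I f).mpr ⟨h, hh, this⟩
    · rw [← hs, Ideal.span_le]
      intro f hf
      exact Ideal.mem_colon_span_singleton.mpr (by rw [mul_comm]; exact hhs f hf)
  refine ⟨h, hh, hcolon, ?_⟩
  apply le_antisymm
  · exact le_inf (fun f hf => Ideal.mem_colon_span_singleton.mpr (I.mul_mem_right _ hf))
      le_sup_left
  · intro f hf
    obtain ⟨hf1, hf2⟩ := Submodule.mem_inf.mp hf
    obtain ⟨a, ha, b, hb, hab⟩ := Submodule.mem_sup.mp hf2
    obtain ⟨g, rfl⟩ := Ideal.mem_span_singleton.mp hb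
    have hcf : C h * f ∈ I := by
      rw [mul_comm]; exact Ideal.mem_colon_span_singleton.mp hf1
    have hg' : C (h * h) * g ∈ I := by
      have e : C (h * h) * g = C h * f - C h * a := by
        rw [← hab, C_mul]; ring
      rw [e]
      exact I.sub_mem hcf (I.mul_mem_left _ ha)
    have hgJ := (mem_contr_iff I g).mpr ⟨h * h, mul_ne_zero hh hh, hg'⟩
    rw [← hcolon] at hgJ
    have hbI : C h * g ∈ I := by
      rw [mul_comm]; exact Ideal.mem_colon_span_singleton.mp hgJ
    rw [← hab]
    exact I.add_mem ha hbI
end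

section
/- Let I be an ideal in ℤ[x₁,…,xₙ] with I ∩ ℤ = ⟨p^ν⟩ for some prime p and ν ≥ 1. Then the map P̄ ↦ preimage of P̄ under the reduction-mod-p map ℤ[x₁,…,xₙ] → 𝔽_p[x₁,…,xₙ] gives a bijection between the minimal primes of I·𝔽_p[x₁,…,xₙ] and the minimal primes of I. -/
open MvPolynomial

theorem stmt_4 (n : ℕ) (p : ℕ) (hp : p.Prime) (ν : ℕ) (hν : 1 ≤ ν)
    (I : Ideal (MvPolynomial (Fin n) ℤ))
    (hI : ∀ a : ℤ, (C a : MvPolynomial (Fin n) ℤ) ∈ I ↔ ((p : ℤ) ^ ν) ∣ a) :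
    Set.BijOn (Ideal.comap (MvPolynomial.map (Int.castRingHom (ZMod p))))
      (Ideal.map (MvPolynomial.map (Int.castRingHom (ZMod p))) I).minimalPrimes
      I.minimalPrimes := by
  haveI : Fact p.Prime := ⟨hp⟩
  set f : MvPolynomial (Fin n) ℤ →+* MvPolynomial (Fin n) (ZMod p) :=
    MvPolynomial.map (Int.castRingHom (ZMod p)) with hfdef
  have hf : Function.Surjective f :=
    MvPolynomial.map_surjective _ ZMod.intCast_surjective
  set J := Ideal.map f I with hJ
  -- kernel of f
  have hker : RingHom.ker f = Ideal.map (C : ℤ →+* MvPolynomial (Fin n) ℤ)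
      (Ideal.span {(p : ℤ)}) := by
    rw [hfdef, MvPolynomial.ker_map, ZMod.ker_intCastRingHom]
  have hkerle : RingHom.ker f ≤ I.radical := by
    rw [hker, Ideal.map_span, Set.image_singleton, Ideal.span_le,
      Set.singleton_subset_iff]
    refine ⟨ν, ?_⟩
    rw [← map_pow]
    exact (hI _).2 dvd_rfl
  have hcm : Ideal.comap f J = I ⊔ RingHom.ker f :=
    Ideal.comap_map_of_surjective f hf I
  have hrad : (Ideal.comap f J).radical = I.radical := by
    apply le_antisymm
    · rw [← Ideal.radical_idem (I := I)]
      apply Ideal.radical_mono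
      rw [hcm, sup_le_iff]
      exact ⟨Ideal.le_radical, hkerle⟩
    · exact Ideal.radical_mono (by rw [hcm]; exact le_sup_left)
  have hmin : (Ideal.comap f J).minimalPrimes = I.minimalPrimes := by
    rw [← Ideal.radical_minimalPrimes (I := Ideal.comap f J), hrad,
      Ideal.radical_minimalPrimes]
  have himg : Ideal.comap f '' J.minimalPrimes = I.minimalPrimes := by
    rw [← Ideal.comap_minimalPrimes_eq_of_surjective hf, hmin]
  have hinj : Set.InjOn (Ideal.comap f) J.minimalPrimes := by
    intro a _ b _ h
    have := congrArg (Ideal.map f) h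
    rwa [Ideal.map_comap_of_surjective f hf, Ideal.map_comap_of_surjective f hf] at this
  have := hinj.bijOn_image
  rwa [himg] at this
end

section
/- Let I be an ideal in ℤ[x₁,…,xₙ] and J the intersection of all primary components of I associated to the minimal primes of I (in some fixed primary decomposition). Then there exists a natural number m such that I = J ∩ (I + (I : J)^m). -/
theorem stmt_6 (n : ℕ) (I : Ideal (MvPolynomial (Fin n) ℤ))
    (s : ℕ) (Q : Fin s → Ideal (MvPolynomial (Fin n) ℤ))
    (hprim : ∀ i, (Q i).IsPrimary)
    (hdec : I = ⨅ i, Q i)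
    (J : Ideal (MvPolynomial (Fin n) ℤ))
    (hJ : J = ⨅ i ∈ {i | (Q i).radical ∈ I.minimalPrimes}, Q i) :
    ∃ m : ℕ, I = J ⊓ (I + (I.colon J) ^ m) := by
  have hIQ : ∀ i, I ≤ Q i := fun i => hdec ▸ iInf_le _ i
  have hIJ : I ≤ J := hJ ▸ le_iInf fun i => le_iInf fun _ => hIQ i
  -- key dichotomy for each component
  have key : ∀ i, J ≤ Q i ∨ I.colon J ≤ (Q i).radical := by
    intro i
    by_cases h : J ≤ Q i
    · exact Or.inl h
    · right
      rw [SetLike.not_le_iff_exists] at h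
      obtain ⟨j, hjJ, hjQ⟩ := h
      intro b hb
      have hbj : j * b ∈ Q i := by
        rw [mul_comm]
        exact hIQ i (Submodule.mem_colon.mp hb j hjJ)
      exact ((Ideal.isPrimary_iff.mp (hprim i)).2 hbj).resolve_left hjQ
  -- choose exponents killing the radicals
  have hfg : ∀ i, ∃ m : ℕ, (Q i).radical ^ m ≤ Q i := fun i =>
    Ideal.exists_radical_pow_le_of_fg (Q i) (IsNoetherian.noetherian _)
  choose f hf using hfg
  refine ⟨Finset.univ.sup f, ?_⟩
  refine le_antisymm (le_inf hIJ le_sup_left) ?_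
  have hle : ∀ i, J ⊓ (I + I.colon J ^ Finset.univ.sup f) ≤ Q i := by
    intro i
    rcases key i with h | h
    · exact le_trans inf_le_left h
    · refine le_trans inf_le_right (sup_le (hIQ i) ?_)
      calc I.colon J ^ Finset.univ.sup f
          ≤ (Q i).radical ^ Finset.univ.sup f := Ideal.pow_right_mono h _
        _ ≤ (Q i).radical ^ f i :=
            Ideal.pow_le_pow_right (Finset.le_sup (Finset.mem_univ i))
        _ ≤ Q i := hf i
  calc J ⊓ (I + I.colon J ^ Finset.univ.sup f) ≤ ⨅ i, Q i := le_iInf hle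
    _ = I := hdec.symm
end

section
/- Let I = Q ∩ J be an ideal in ℤ[x₁,…,xₙ] with √I = P prime, Q a P-primary ideal, P ∩ ℤ = ⟨p⟩ for a prime p, and √J strictly containing P. Let u ⊆ {x₁,…,xₙ} be a maximal independent set of variables for P·𝔽_p[x₁,…,xₙ], and let R = ℤ[u]_{⟨p⟩}. Then I·R[x∖u] ∩ ℤ[x₁,…,xₙ] = Q. -/
open MvPolynomial

noncomputable section

/-- The polynomial ring `ℤ[u]` in the variables belonging to `u`. -/
abbrev ZU (n : ℕ) (u : Finset (Fin n)) : Type := MvPolynomial {i : Fin n // i ∈ u} ℤ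

/-- The ideal `⟨p⟩` of `ℤ[u]`. -/
abbrev pIdeal (n : ℕ) (p : ℕ) (u : Finset (Fin n)) : Ideal (ZU n u) :=
  Ideal.span {(C (p : ℤ) : ZU n u)}

/-- The localization `R = ℤ[u]_{⟨p⟩}`. -/
abbrev LocZU (n p : ℕ) (u : Finset (Fin n)) [hpr : (pIdeal n p u).IsPrime] : Type :=
  Localization (pIdeal n p u).primeCompl

/-- The canonical map `ℤ[x₁,…,xₙ] → R[x∖u]` where `R = ℤ[u]_{⟨p⟩}`,
sending a variable in `u` to the corresponding constant of `R` and a variable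
outside `u` to itself. -/
def extMap (n p : ℕ) (u : Finset (Fin n)) [hpr : (pIdeal n p u).IsPrime] :
    MvPolynomial (Fin n) ℤ →+* MvPolynomial {i : Fin n // i ∉ u} (LocZU n p u) :=
  (aeval fun i : Fin n =>
    if h : i ∈ u then
      MvPolynomial.C (algebraMap (ZU n u) (LocZU n p u) (X ⟨i, h⟩))
    else X (⟨i, h⟩ : {i : Fin n // i ∉ u})).toRingHom

set_option maxHeartbeats 1000000
set_option synthInstance.maxHeartbeats 1000000

lemma ringHom_ext_int {σ A : Type*} [Ring A] {f g : MvPolynomial σ ℤ →+* A}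
    (hX : ∀ i, f (X i) = g (X i)) : f = g :=
  MvPolynomial.ringHom_ext (fun r => by
    have h : (C (r:ℤ) : MvPolynomial σ ℤ) = ((r : ℤ) : MvPolynomial σ ℤ) := by simp
    rw [h, map_intCast, map_intCast]) hX

section ExtMap
variable (n p : ℕ) (u : Finset (Fin n)) [hpr : (pIdeal n p u).IsPrime]

def eIso : MvPolynomial (Fin n) ℤ ≃+* MvPolynomial {i : Fin n // i ∉ u} (ZU n u) :=
  ((renameEquiv ℤ (((Equiv.sumComm {i : Fin n // i ∉ u} {i : Fin n // i ∈ u}).trans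
      (Equiv.sumCompl (· ∈ u))).symm)).trans
    (sumAlgEquiv ℤ _ _)).toRingEquiv

lemma extMap_eq :
    extMap n p u = (MvPolynomial.map (algebraMap (ZU n u) (LocZU n p u))).comp
      ((eIso n u : MvPolynomial (Fin n) ℤ →+* MvPolynomial {i : Fin n // i ∉ u} (ZU n u))) := by
  refine ringHom_ext_int (A := MvPolynomial {i : Fin n // i ∉ u} (LocZU n p u)) (fun i => ?_)
  by_cases h : i ∈ u
  · simp [extMap, eIso, Equiv.sumCompl, h, sumAlgEquiv_X_inl, sumAlgEquiv_X_inr, sumRingEquiv, mvPolynomialEquivMvPolynomial]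
  · simp [extMap, eIso, Equiv.sumCompl, h, sumAlgEquiv_X_inl, sumAlgEquiv_X_inr, sumRingEquiv, mvPolynomialEquivMvPolynomial]

lemma algebraMap_ZU_injective :
    Function.Injective (algebraMap (ZU n u) (LocZU n p u)) :=
  IsLocalization.injective (LocZU n p u) (pIdeal n p u).primeCompl_le_nonZeroDivisors

lemma extMap_injective : Function.Injective (extMap n p u) := by
  rw [extMap_eq, RingHom.coe_comp]
  exact Function.Injective.comp (MvPolynomial.map_injective _ (algebraMap_ZU_injective n p u))
    (eIso n u).injective

lemma extMap_rename (t : ZU n u) :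
    extMap n p u (rename Subtype.val t) = C (algebraMap (ZU n u) (LocZU n p u) t) := by
  have h : (extMap n p u).comp (rename (Subtype.val : {i : Fin n // i ∈ u} → Fin n)).toRingHom
      = (C : LocZU n p u →+* _).comp (algebraMap (ZU n u) (LocZU n p u)) := by
    refine ringHom_ext_int (A := MvPolynomial {i : Fin n // i ∉ u} (LocZU n p u)) (fun i => ?_)
    simp [extMap]
  exact RingHom.congr_fun h t

lemma extMap_unit {t : ZU n u} (ht : t ∈ (pIdeal n p u).primeCompl) :
    IsUnit (extMap n p u (rename Subtype.val t)) := by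
  rw [extMap_rename]
  exact (IsLocalization.map_units (LocZU n p u) ⟨t, ht⟩).map (C : LocZU n p u →+* _)

set_option synthInstance.maxHeartbeats 1000000 in
/-- clear denominators -/
lemma extMap_denom (z : MvPolynomial {i : Fin n // i ∉ u} (LocZU n p u)) :
    ∃ t ∈ (pIdeal n p u).primeCompl, ∃ a : MvPolynomial (Fin n) ℤ,
      z * extMap n p u (rename Subtype.val t) = extMap n p u a := by
  classical
  obtain ⟨b, hb⟩ := IsLocalization.exist_integer_multiples_of_finset
    (pIdeal n p u).primeCompl (z.support.image z.coeff)
  refine ⟨b.1, b.2, ?_⟩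
  have hcoeff : ∀ m, ∃ c : ZU n u, algebraMap (ZU n u) (LocZU n p u) c
      = (z * C (algebraMap (ZU n u) (LocZU n p u) b.1)).coeff m := by
    intro m
    rw [mul_comm, MvPolynomial.coeff_C_mul]
    by_cases hm : m ∈ z.support
    · obtain ⟨c, hc⟩ := hb (z.coeff m) (Finset.mem_image_of_mem _ hm)
      exact ⟨c, by rw [hc]; simp [Algebra.smul_def]⟩
    · refine ⟨0, ?_⟩
      rw [MvPolynomial.notMem_support_iff.1 hm]
      simp
  choose cf hcf using hcoeff
  set w := z * C (algebraMap (ZU n u) (LocZU n p u) b.1) with hw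
  refine ⟨(eIso n u).symm (∑ m ∈ w.support, monomial m (cf m)), ?_⟩
  have h2 : (MvPolynomial.map (algebraMap (ZU n u) (LocZU n p u)))
      (∑ m ∈ w.support, monomial m (cf m)) = w := by
    rw [map_sum (MvPolynomial.map (algebraMap (ZU n u) (LocZU n p u)))]
    conv_rhs => rw [← MvPolynomial.support_sum_monomial_coeff w]
    refine Finset.sum_congr rfl (fun m _ => ?_)
    rw [MvPolynomial.map_monomial, hcf m]
  rw [extMap_rename, extMap_eq]
  simp only [RingHom.comp_apply, RingEquiv.toRingHom_eq_coe, RingHom.coe_coe,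
    RingEquiv.apply_symm_apply]
  exact h2.symm
end ExtMap

lemma strictMono_finCons {α : Type*} [Preorder α] {m : ℕ} {f : Fin (m + 1) → α} {x : α}
    (hf : StrictMono f) (hx : x < f 0) : StrictMono (Fin.cons x f) := by
  intro a b hab
  rcases Fin.eq_zero_or_eq_succ a with ha | ⟨a', rfl⟩
  · subst ha
    rcases Fin.eq_zero_or_eq_succ b with hb | ⟨b', rfl⟩
    · subst hb; exact absurd hab (lt_irrefl _)
    · simp only [Fin.cons_zero, Fin.cons_succ]
      exact lt_of_lt_of_le hx (hf.monotone (Fin.zero_le _))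
  · rcases Fin.eq_zero_or_eq_succ b with hb | ⟨b', rfl⟩
    · subst hb; exact absurd hab (Fin.not_lt_zero _)
    · simp only [Fin.cons_succ]
      exact hf (by simpa using hab)

theorem key_chain (F : Type*) [Field F] (n : ℕ) :
    ∀ (d : ℕ) (u : Finset (Fin n)) (_ : u.card = d) (q : Ideal (MvPolynomial (Fin n) F))
      (_ : q.IsPrime)
      (_ : ∀ g : MvPolynomial {i : Fin n // i ∈ u} F, rename Subtype.val g ∈ q → g = 0),
      ∃ c : Fin (d + 1) → Ideal (MvPolynomial (Fin n) F),
        StrictMono c ∧ (∀ j, (c j).IsPrime) ∧ c 0 = q := by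
  intro d
  induction d with
  | zero =>
    intro u hc q hq hu
    refine ⟨fun _ => q, fun a b h => absurd (Fin.lt_def.mp h)
      (by have := a.isLt; have := b.isLt; omega), fun _ => hq, rfl⟩
  | succ d ih =>
    intro u hc q hq hu
    classical
    haveI := hq
    obtain ⟨i, hi⟩ := Finset.card_pos.mp (by omega : 0 < u.card)
    set u' : Finset (Fin n) := u.erase i with hu'def
    have hc' : u'.card = d := by rw [hu'def, Finset.card_erase_of_mem hi, hc]; omega
    set A := MvPolynomial (Fin n) F
    set D := A ⧸ q with hD
    set π : A →+* D := Ideal.Quotient.mk q with hπ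
    set RU := MvPolynomial {j : Fin n // j ∈ u'} F with hRU
    set rn : RU →+* A := (rename (Subtype.val : {j : Fin n // j ∈ u'} → Fin n)).toRingHom with hrn
    set ρ : RU →+* D := π.comp rn with hρ
    have hincl : ∀ j : {j : Fin n // j ∈ u'}, (j : Fin n) ∈ u := fun j => Finset.mem_of_mem_erase j.2
    set incl : {j : Fin n // j ∈ u'} → {j : Fin n // j ∈ u} := fun j => ⟨j.1, hincl j⟩ with hincl'
    have hinclinj : Function.Injective incl := by
      intro a b hab
      have h0 : (incl a).1 = (incl b).1 := congrArg Subtype.val hab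
      exact Subtype.ext h0
    have hρinj : Function.Injective ρ := by
      rw [injective_iff_map_eq_zero]
      intro g hg
      have h1 : rename (Subtype.val : {j : Fin n // j ∈ u} → Fin n) (rename incl g) = rn g := by
        rw [rename_rename]; rfl
      have h2 : rn g ∈ q := (Ideal.Quotient.eq_zero_iff_mem).mp hg
      have h3 := hu (rename incl g) (by rw [h1]; exact h2)
      exact (map_eq_zero_iff _ (rename_injective _ hinclinj)).mp h3
    set T : Submonoid D :=
      { carrier := {x | ∃ g : RU, g ≠ 0 ∧ ρ g = x}
        one_mem' := ⟨1, one_ne_zero, map_one ρ⟩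
        mul_mem' := by
          rintro x y ⟨g, hg, rfl⟩ ⟨h, hh, rfl⟩
          exact ⟨g * h, mul_ne_zero hg hh, map_mul ρ g h⟩ } with hT
    have hT0 : (0 : D) ∉ T := by
      rintro ⟨g, hg, hg0⟩
      exact hg (by apply hρinj; rw [hg0, map_zero])
    have hTnzd : T ≤ nonZeroDivisors D := fun x hx =>
      mem_nonZeroDivisors_of_ne_zero (fun h => hT0 (h ▸ hx))
    set DT := Localization T with hDT
    haveI : IsDomain DT := IsLocalization.isDomain_localization hTnzd
    set φD : D →+* DT := algebraMap D DT with hφD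
    have hφDinj : Function.Injective φD := IsLocalization.injective DT hTnzd
    have hnotfield : ¬ IsField DT := by
      intro hF
      letI : Field DT := hF.toField
      set K := FractionRing RU with hK
      set ρT : RU →+* DT := φD.comp ρ with hρT
      have hρunit : ∀ (y : nonZeroDivisors RU), IsUnit (ρT y) := by
        rintro ⟨y, hy⟩
        have hy0 : y ≠ 0 := nonZeroDivisors.ne_zero hy
        exact IsLocalization.map_units DT (⟨ρ y, ⟨y, hy0, rfl⟩⟩ : T)
      set ψK : K →+* DT := IsLocalization.lift hρunit with hψKdef
      have hψKcomp : ψK.comp (algebraMap RU K) = ρT := IsLocalization.lift_comp hρunit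
      set ζ : MvPolynomial (Fin n) K →+* DT :=
        eval₂Hom ψK (fun j => φD (π (X j))) with hζ
      have hζC : ∀ kk : K, ζ (C kk) = ψK kk := fun kk => by simp [hζ]
      have hηval : ∀ f : A, ζ (map ((algebraMap RU K).comp (C : F →+* RU)) f) = φD (π f) := by
        intro f
        have e1 : ζ (map ((algebraMap RU K).comp (C : F →+* RU)) f)
            = eval₂ (ψK.comp ((algebraMap RU K).comp (C : F →+* RU)))
                (fun j => φD (π (X j))) f := by
          simp only [hζ, coe_eval₂Hom]
          rw [eval₂_map]
        have e2 : ψK.comp ((algebraMap RU K).comp (C : F →+* RU))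
            = (φD.comp π).comp (C : F →+* A) := by
          rw [← RingHom.comp_assoc, hψKcomp]
          apply RingHom.ext; intro r
          show φD (π (rename Subtype.val (C r))) = φD (π (C r))
          rw [rename_C]
        rw [e1, e2]
        have e3 := MvPolynomial.eval₂_comp_left (φD.comp π) (C : F →+* A) (X : Fin n → A) f
        rw [eval₂_eta] at e3
        rw [show (fun j => φD (π (X j))) = (⇑(φD.comp π) ∘ X) from rfl, ← e3]
        rfl
      have hζsurj : Function.Surjective ζ := by
        intro z
        obtain ⟨⟨dd, t⟩, hmk⟩ := IsLocalization.mk'_surjective T z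
        obtain ⟨f, hf⟩ := Ideal.Quotient.mk_surjective (I := q) dd
        obtain ⟨g, hg, hgt⟩ := t.2
        have hKg0 : (algebraMap RU K) g ≠ 0 := fun h =>
          hg (IsFractionRing.injective RU K (by rw [h, map_zero]))
        refine ⟨map ((algebraMap RU K).comp (C : F →+* RU)) f * C ((algebraMap RU K g)⁻¹), ?_⟩
        rw [map_mul, hηval, hζC]
        have h1 : ψK (algebraMap RU K g) = φD t.1 := by
          rw [← hgt]
          have h1' := RingHom.congr_fun hψKcomp g
          rw [RingHom.comp_apply] at h1'
          rw [h1']; rfl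
        have h2 : ψK ((algebraMap RU K g)⁻¹) * φD t.1 = 1 := by
          rw [← h1, ← map_mul, inv_mul_cancel₀ hKg0, map_one]
        have h3 := IsLocalization.mk'_spec DT dd t
        have hunit : IsUnit (φD t.1) := IsLocalization.map_units DT t
        rw [← hmk]
        apply hunit.mul_left_cancel
        calc φD t.1 * (φD (π f) * ψK ((algebraMap RU K g)⁻¹))
            = φD (π f) * (ψK ((algebraMap RU K g)⁻¹) * φD t.1) := by ring
          _ = φD (π f) := by rw [h2, mul_one]
          _ = φD t.1 * IsLocalization.mk' DT dd t := by
              rw [hf, ← h3]; ring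
      have hint := MvPolynomial.comp_C_integral_of_surjective_of_isJacobsonRing ζ hζsurj
      have hcomp : ζ.comp (C : K →+* MvPolynomial (Fin n) K) = ψK := RingHom.ext hζC
      rw [hcomp] at hint
      obtain ⟨pp, hmonic, hev⟩ := hint (φD (π (X i)))
      have hev2 := IsLocalization.integerNormalization_eval₂_eq_zero
        (nonZeroDivisors RU) ψK pp hev
      rw [hψKcomp] at hev2
      set q₀ := IsLocalization.integerNormalization (nonZeroDivisors RU) pp with hq₀def
      have hq₀ : q₀ ≠ 0 := by
        rw [Ne, IsFractionRing.integerNormalization_eq_zero_iff]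
        exact hmonic.ne_zero
      have hw0 : (φD.comp π) (Polynomial.eval₂ rn (X i) q₀) = 0 := by
        rw [Polynomial.hom_eval₂ q₀ rn (φD.comp π) (X i)]
        have hcomp2 : (φD.comp π).comp rn = ρT := by
          rw [hρT, hρ, RingHom.comp_assoc]
        rw [hcomp2]
        exact hev2
      have hwq : Polynomial.eval₂ rn (X i) q₀ ∈ q := by
        have h1 : π (Polynomial.eval₂ rn (X i) q₀) = 0 := by
          apply hφDinj
          rw [map_zero]
          exact hw0
        exact (Ideal.Quotient.eq_zero_iff_mem).mp h1
      set ε : Option {j : Fin n // j ∈ u'} ≃ {j : Fin n // j ∈ u} :=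
        { toFun := fun o => o.elim ⟨i, hi⟩ incl
          invFun := fun j => if h : j.1 = i then none
            else some ⟨j.1, Finset.mem_erase.mpr ⟨h, j.2⟩⟩
          left_inv := by
            rintro (_ | j)
            · simp
            · have hj : (j : Fin n) ≠ i := (Finset.mem_erase.mp j.2).1
              simp [incl, hj]
          right_inv := by
            intro j
            by_cases h : j.1 = i
            · simp only [h, dif_pos]
              exact Subtype.ext h.symm
            · simp [h, incl] } with hε
      set e : Polynomial RU ≃+* MvPolynomial {j : Fin n // j ∈ u} F :=
        ((optionEquivLeft F {j : Fin n // j ∈ u'}).symm.trans (renameEquiv F ε)).toRingEquiv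
        with he
      have heC : ∀ a : RU, e (Polynomial.C a) = rename incl a := by
        have hh : (e : Polynomial RU →+* MvPolynomial {j : Fin n // j ∈ u} F).comp
            (Polynomial.C : RU →+* Polynomial RU)
            = (rename incl).toRingHom := by
          apply MvPolynomial.ringHom_ext
          · intro r
            simp only [RingHom.comp_apply, he]
            have h1 : (Polynomial.C (C r : RU)) = algebraMap F (Polynomial RU) r := rfl
            rw [h1]
            simp only [AlgEquiv.toRingEquiv_eq_coe, RingEquiv.coe_toRingHom, AlgEquiv.coe_ringEquiv]
            rw [AlgEquiv.commutes]
            simp [algebraMap_eq]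
          · intro j
            simp only [RingHom.comp_apply, he]
            have h1 : (optionEquivLeft F {j : Fin n // j ∈ u'}).symm (Polynomial.C (X j))
                = X (some j) := by
              rw [← optionEquivLeft_X_some, AlgEquiv.symm_apply_apply]
            simp only [AlgEquiv.toRingEquiv_eq_coe, RingEquiv.coe_toRingHom, AlgEquiv.coe_ringEquiv,
              AlgEquiv.trans_apply]
            rw [h1]
            simp [rename_X, hε]
        exact fun a => RingHom.congr_fun hh a
      have heX : e Polynomial.X = X (⟨i, hi⟩ : {j : Fin n // j ∈ u}) := by
        simp only [he, AlgEquiv.toRingEquiv_eq_coe, AlgEquiv.coe_ringEquiv, AlgEquiv.trans_apply]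
        have h1 : (optionEquivLeft F {j : Fin n // j ∈ u'}).symm Polynomial.X = X none := by
          rw [← optionEquivLeft_X_none, AlgEquiv.symm_apply_apply]
        rw [h1]
        simp [rename_X, hε]
      have hre : (rename (Subtype.val : {j : Fin n // j ∈ u} → Fin n)).toRingHom.comp
          (e : Polynomial RU →+* MvPolynomial {j : Fin n // j ∈ u} F)
          = Polynomial.eval₂RingHom rn (X i) := by
        apply Polynomial.ringHom_ext'
        · apply RingHom.ext; intro a
          simp only [RingHom.comp_apply]
          rw [show ((e : Polynomial RU →+* MvPolynomial {j : Fin n // j ∈ u} F)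
            (Polynomial.C a)) = e (Polynomial.C a) from rfl, heC a]
          rw [Polynomial.coe_eval₂RingHom, Polynomial.eval₂_C]
          show rename (Subtype.val) (rename incl a) = rn a
          rw [rename_rename]; rfl
        · simp only [RingHom.comp_apply]
          rw [show ((e : Polynomial RU →+* MvPolynomial {j : Fin n // j ∈ u} F)
            Polynomial.X) = e Polynomial.X from rfl, heX]
          rw [Polynomial.coe_eval₂RingHom, Polynomial.eval₂_X]
          show rename (Subtype.val) (X (⟨i, hi⟩ : {j : Fin n // j ∈ u})) = X i
          rw [rename_X]
      have hfin : rename (Subtype.val : {j : Fin n // j ∈ u} → Fin n) (e q₀) ∈ q := by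
        have h6 := RingHom.congr_fun hre q₀
        simp only [RingHom.comp_apply] at h6
        rw [show ((rename (Subtype.val : {j : Fin n // j ∈ u} → Fin n)).toRingHom
          ((e : Polynomial RU →+* _) q₀)) = rename (Subtype.val) (e q₀) from rfl] at h6
        rw [h6, Polynomial.coe_eval₂RingHom]
        exact hwq
      have h7 := hu (e q₀) hfin
      exact hq₀ (e.injective (by rw [h7, map_zero]))
    -- extract a bigger prime
    obtain ⟨m, hm0, hmp⟩ := (Ring.not_isField_iff_exists_prime (R := DT)).mp hnotfield
    haveI := hmp
    set q'' : Ideal D := Ideal.comap φD m with hq''def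
    haveI : q''.IsPrime := Ideal.IsPrime.comap φD
    have hq''T : ∀ x ∈ T, x ∉ q'' := by
      intro x hx hxm
      exact hmp.ne_top (Ideal.eq_top_of_isUnit_mem m hxm (IsLocalization.map_units DT ⟨x, hx⟩))
    have hex : ∃ dd : D, dd ∈ q'' ∧ dd ≠ 0 := by
      obtain ⟨z, hz, hz0⟩ := Submodule.exists_mem_ne_zero_of_ne_bot hm0
      obtain ⟨⟨dd, t⟩, hmk⟩ := IsLocalization.mk'_surjective T z
      have h1 : φD dd = z * φD t.1 := by
        rw [← hmk]; exact (IsLocalization.mk'_spec DT dd t).symm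
      refine ⟨dd, ?_, ?_⟩
      · show φD dd ∈ m
        rw [h1]; exact Ideal.mul_mem_right _ m hz
      · intro h0
        apply hz0
        have h2 : z * φD t.1 = 0 := by rw [← h1, h0, map_zero]
        rcases mul_eq_zero.mp h2 with h3 | h3
        · exact h3
        · exact absurd h3 (IsLocalization.map_units DT t).ne_zero
    obtain ⟨dd, hddq, hdd0⟩ := hex
    set q' : Ideal A := Ideal.comap π q'' with hq'def
    haveI hq'p : q'.IsPrime := Ideal.IsPrime.comap π
    have hqq' : q ≤ q' := by
      intro x hx
      show π x ∈ q''
      rw [(Ideal.Quotient.eq_zero_iff_mem).mpr hx]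
      exact q''.zero_mem
    have hqne : q ≠ q' := by
      obtain ⟨f, hf⟩ := Ideal.Quotient.mk_surjective (I := q) dd
      intro heq
      apply hdd0
      have hfq' : f ∈ q' := by show π f ∈ q''; rw [hf]; exact hddq
      rw [← heq] at hfq'
      rw [← hf]
      exact (Ideal.Quotient.eq_zero_iff_mem).mpr hfq'
    have hu'q' : ∀ g : MvPolynomial {j : Fin n // j ∈ u'} F, rename Subtype.val g ∈ q' → g = 0 := by
      intro g hg
      by_contra hg0
      exact hq''T (ρ g) ⟨g, hg0, rfl⟩ hg
    obtain ⟨c', hc'm, hc'p, hc'0⟩ := ih u' hc' q' hq'p hu'q'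
    refine ⟨Fin.cons q c', ?_, ?_, ?_⟩
    · exact strictMono_finCons hc'm (by rw [hc'0]; exact lt_of_le_of_ne hqq' hqne)
    · intro j
      rcases Fin.eq_zero_or_eq_succ j with h | ⟨j', rfl⟩
      · subst h; simpa using hq
      · simpa using hc'p j'
    · simp
set_option maxHeartbeats 1000000 in
lemma mem_map_extMap_iff (n p : ℕ) (u : Finset (Fin n)) [hpr : (pIdeal n p u).IsPrime]
    (I : Ideal (MvPolynomial (Fin n) ℤ)) (z : MvPolynomial {i : Fin n // i ∉ u} (LocZU n p u)) :
    z ∈ Ideal.map (extMap n p u) I ↔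
      ∃ t ∈ (pIdeal n p u).primeCompl, ∃ a ∈ I,
        z * extMap n p u (rename Subtype.val t) = extMap n p u a := by
  constructor
  · intro hz
    have h1 : (1 : ZU n u) ∈ (pIdeal n p u).primeCompl := Submonoid.one_mem _
    refine Submodule.span_induction
      (p := fun x _ => ∃ t ∈ (pIdeal n p u).primeCompl, ∃ a ∈ I,
        x * extMap n p u (rename Subtype.val t) = extMap n p u a) ?_ ?_ ?_ ?_ hz
    · rintro x ⟨a, ha, rfl⟩
      exact ⟨1, h1, a, ha, by simp⟩
    · exact ⟨1, h1, 0, I.zero_mem, by simp⟩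
    · rintro x y hx hy ⟨t1, ht1, a1, ha1, e1⟩ ⟨t2, ht2, a2, ha2, e2⟩
      refine ⟨t1 * t2, Submonoid.mul_mem _ ht1 ht2,
        a1 * rename Subtype.val t2 + a2 * rename Subtype.val t1,
        I.add_mem (I.mul_mem_right _ ha1) (I.mul_mem_right _ ha2), ?_⟩
      rw [map_mul, map_mul, map_add, map_mul, map_mul, ← e1, ← e2]
      ring
    · rintro r x hx ⟨t, ht, a, ha, e⟩
      obtain ⟨t0, ht0, b, hb⟩ := extMap_denom n p u r
      refine ⟨t0 * t, Submonoid.mul_mem _ ht0 ht, b * a, I.mul_mem_left _ ha, ?_⟩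
      rw [map_mul, map_mul, map_mul, smul_eq_mul]
      calc r * x * (extMap n p u (rename Subtype.val t0) * extMap n p u (rename Subtype.val t))
          = (r * extMap n p u (rename Subtype.val t0))
            * (x * extMap n p u (rename Subtype.val t)) := by ring
        _ = extMap n p u b * extMap n p u a := by rw [hb, e]
  · rintro ⟨t, ht, a, ha, e⟩
    have hun := extMap_unit n p u ht
    have hmem : z * extMap n p u (rename Subtype.val t) ∈ Ideal.map (extMap n p u) I := by
      rw [e]; exact Ideal.mem_map_of_mem _ ha
    have h2 := Ideal.mul_mem_left _ (↑hun.unit⁻¹ :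
      MvPolynomial {i : Fin n // i ∉ u} (LocZU n p u)) hmem
    rwa [show (↑hun.unit⁻¹ : MvPolynomial {i : Fin n // i ∉ u} (LocZU n p u))
        * (z * extMap n p u (rename Subtype.val t)) = z from by
      rw [mul_comm z, ← mul_assoc, hun.val_inv_mul, one_mul]] at h2

set_option maxHeartbeats 4000000 in
theorem stmt_11 (n p : ℕ) (hp : p.Prime)
    (I Q J P : Ideal (MvPolynomial (Fin n) ℤ))
    (hI : I = Q ⊓ J) (hPprime : P.IsPrime) (hrad : I.radical = P)
    (hQ : Q.IsPrimary) (hQrad : Q.radical = P)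
    (hPZ : ∀ a : ℤ, (C a : MvPolynomial (Fin n) ℤ) ∈ P ↔ (p : ℤ) ∣ a)
    (hJ : P < J.radical)
    (u : Finset (Fin n))
    (hind : ∀ g : MvPolynomial {i : Fin n // i ∈ u} (ZMod p),
      rename Subtype.val g ∈ P.map (MvPolynomial.map (Int.castRingHom (ZMod p))) → g = 0)
    (hmax : ringKrullDim
        (MvPolynomial (Fin n) (ZMod p) ⧸
          P.map (MvPolynomial.map (Int.castRingHom (ZMod p))))
      = (u.card : WithBot (WithTop ℕ)))
    [hpr : (pIdeal n p u).IsPrime] :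
    Ideal.comap (extMap n p u) (Ideal.map (extMap n p u) I) = Q := by
  haveI := Fact.mk hp
  classical
  set π : MvPolynomial (Fin n) ℤ →+* MvPolynomial (Fin n) (ZMod p) :=
    MvPolynomial.map (Int.castRingHom (ZMod p)) with hπdef
  have hπsurj : Function.Surjective π :=
    MvPolynomial.map_surjective _ ZMod.intCast_surjective
  have hker : ∀ f, π f = 0 ↔ f ∈ Ideal.span {(C (p:ℤ) : MvPolynomial (Fin n) ℤ)} := by
    intro f
    rw [Ideal.mem_span_singleton, C_dvd_iff_zmod]
  have hCpP : (C (p:ℤ) : MvPolynomial (Fin n) ℤ) ∈ P := (hPZ p).mpr dvd_rfl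
  have hkerP : RingHom.ker π ≤ P := by
    intro f hf
    rw [RingHom.mem_ker] at hf
    have h1 : f ∈ Ideal.span {(C (p:ℤ) : MvPolynomial (Fin n) ℤ)} := (hker f).mp hf
    exact (Ideal.span_le.mpr (Set.singleton_subset_iff.mpr hCpP)) h1
  -- elements of ℤ[u] not divisible by p do not lie in P
  have hnotP : ∀ t : ZU n u, t ∉ pIdeal n p u → rename Subtype.val t ∉ P := by
    intro t ht hmem
    apply ht
    have h1 : π (rename Subtype.val t) ∈ P.map π := Ideal.mem_map_of_mem π hmem
    rw [hπdef, MvPolynomial.map_rename] at h1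
    have h2 := hind _ h1
    rw [show pIdeal n p u = Ideal.span {(C (p:ℤ) : ZU n u)} from rfl,
      Ideal.mem_span_singleton, C_dvd_iff_zmod]
    exact h2
  -- find an element of ℤ[u] ∖ pℤ[u] in √J
  have hPrad : P ≤ J.radical := le_of_lt hJ
  obtain ⟨g0, hg0J, hg0P⟩ := SetLike.exists_of_lt hJ
  set Pb : Ideal (MvPolynomial (Fin n) (ZMod p)) := P.map π with hPbdef
  set Jb : Ideal (MvPolynomial (Fin n) (ZMod p)) := (J.radical).map π with hJbdef
  haveI hPbprime : Pb.IsPrime := Ideal.map_isPrime_of_surjective hπsurj hkerP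
  have hexc : ∃ c : MvPolynomial {i : Fin n // i ∈ u} (ZMod p),
      c ≠ 0 ∧ rename Subtype.val c ∈ Jb := by
    by_contra hno
    push_neg at hno
    set S : Submonoid (MvPolynomial (Fin n) (ZMod p)) :=
      { carrier := {x | ∃ c : MvPolynomial {i : Fin n // i ∈ u} (ZMod p),
          c ≠ 0 ∧ rename Subtype.val c = x}
        one_mem' := ⟨1, one_ne_zero, map_one _⟩
        mul_mem' := by
          rintro x y ⟨c, hc, rfl⟩ ⟨c', hc', rfl⟩
          exact ⟨c * c', mul_ne_zero hc hc', map_mul _ c c'⟩ } with hS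
    have hdisj : Disjoint (Jb : Set (MvPolynomial (Fin n) (ZMod p))) S :=
      Set.disjoint_left.mpr (by rintro x hx ⟨c, hc, rfl⟩; exact hno c hc hx)
    obtain ⟨P₂, hP₂p, hP₂le, hP₂disj⟩ := Ideal.exists_le_prime_disjoint Jb S hdisj
    have hPbJb : Pb ≤ Jb := Ideal.map_mono hPrad
    have hgb : π g0 ∈ P₂ := hP₂le (Ideal.mem_map_of_mem π hg0J)
    have hgnb : π g0 ∉ Pb := by
      intro hmem
      apply hg0P
      have h1 : g0 ∈ Ideal.comap π Pb := hmem
      rw [hPbdef, Ideal.comap_map_of_surjective π hπsurj] at h1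
      rw [← RingHom.ker_eq_comap_bot] at h1
      exact (sup_le le_rfl hkerP) h1
    have hP₂indep : ∀ g : MvPolynomial {i : Fin n // i ∈ u} (ZMod p),
        rename Subtype.val g ∈ P₂ → g = 0 := by
      intro g hg
      by_contra h0
      exact Set.disjoint_left.mp hP₂disj hg ⟨g, h0, rfl⟩
    obtain ⟨c, hcm, hcp, hc0⟩ := key_chain (ZMod p) n u.card u rfl P₂ hP₂p hP₂indep
    set mkq : MvPolynomial (Fin n) (ZMod p) →+* (MvPolynomial (Fin n) (ZMod p) ⧸ Pb) :=
      Ideal.Quotient.mk Pb with hmkq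
    have hmkqsurj : Function.Surjective mkq := Ideal.Quotient.mk_surjective
    have hkerq : RingHom.ker mkq = Pb := Ideal.mk_ker
    set cc : Fin (u.card + 2) → Ideal (MvPolynomial (Fin n) (ZMod p)) := Fin.cons Pb c with hcc
    have hccm : StrictMono cc := strictMono_finCons hcm
      (by rw [hc0]
          exact lt_of_le_of_ne (le_trans hPbJb hP₂le) (fun h => hgnb (h ▸ hgb)))
    have hccp : ∀ j, (cc j).IsPrime := by
      intro j
      rcases Fin.eq_zero_or_eq_succ j with h | ⟨j', rfl⟩
      · subst h; simpa [hcc] using hPbprime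
      · simpa [hcc] using hcp j'
    have hccPb : ∀ j, Pb ≤ cc j := by
      intro j
      have h1 : cc 0 ≤ cc j := hccm.monotone (Fin.zero_le j)
      simpa [hcc] using h1
    have hmapprime : ∀ j, (Ideal.map mkq (cc j)).IsPrime := by
      intro j
      haveI := hccp j
      exact Ideal.map_isPrime_of_surjective hmkqsurj (by rw [hkerq]; exact hccPb j)
    have hstep : ∀ (a b : Ideal (MvPolynomial (Fin n) (ZMod p))),
        Pb ≤ a → Pb ≤ b → a < b → Ideal.map mkq a < Ideal.map mkq b := by
      intro a b ha hb hab
      refine lt_of_le_of_ne (Ideal.map_mono hab.le) ?_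
      intro heq
      have hca : Ideal.comap mkq (Ideal.map mkq a) = a := by
        rw [Ideal.comap_map_of_surjective mkq hmkqsurj, ← RingHom.ker_eq_comap_bot, hkerq]
        exact sup_eq_left.mpr ha
      have hcb : Ideal.comap mkq (Ideal.map mkq b) = b := by
        rw [Ideal.comap_map_of_surjective mkq hmkqsurj, ← RingHom.ker_eq_comap_bot, hkerq]
        exact sup_eq_left.mpr hb
      exact hab.ne (by rw [← hca, ← hcb, heq])
    set ser : LTSeries (PrimeSpectrum (MvPolynomial (Fin n) (ZMod p) ⧸ Pb)) :=
      { length := u.card + 1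
        toFun := fun j => ⟨Ideal.map mkq (cc j), hmapprime j⟩
        step := fun j => by
          show (⟨Ideal.map mkq (cc j.castSucc), _⟩ : PrimeSpectrum _)
            < ⟨Ideal.map mkq (cc j.succ), _⟩
          exact hstep _ _ (hccPb _) (hccPb _) (hccm (Fin.castSucc_lt_succ (i := j))) } with hser
    have h1 := Order.LTSeries.length_le_krullDim ser
    rw [show ser.length = u.card + 1 from rfl] at h1
    rw [show Order.krullDim (PrimeSpectrum (MvPolynomial (Fin n) (ZMod p) ⧸ Pb))
      = ringKrullDim (MvPolynomial (Fin n) (ZMod p) ⧸ Pb) from rfl] at h1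
    rw [show (Pb : Ideal (MvPolynomial (Fin n) (ZMod p)))
      = P.map (MvPolynomial.map (Int.castRingHom (ZMod p))) from rfl] at h1
    rw [hmax] at h1
    norm_cast at h1
    exact absurd (Nat.cast_le.mp h1) (by omega)
  obtain ⟨c, hc0, hcJb⟩ := hexc
  obtain ⟨t, ht⟩ := MvPolynomial.map_surjective (Int.castRingHom (ZMod p))
    ZMod.intCast_surjective c
  have htp : t ∉ pIdeal n p u := by
    intro hmem
    apply hc0
    rw [← ht]
    have h1 : C (p:ℤ) ∣ t := Ideal.mem_span_singleton.mp hmem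
    exact (C_dvd_iff_zmod p t).mp h1
  have hradmem : rename Subtype.val t ∈ J.radical := by
    have h1 : π (rename Subtype.val t) ∈ Jb := by
      rw [hπdef, MvPolynomial.map_rename, ht]; exact hcJb
    have h2 : rename Subtype.val t ∈ Ideal.comap π Jb := h1
    rw [hJbdef, Ideal.comap_map_of_surjective π hπsurj, ← RingHom.ker_eq_comap_bot] at h2
    exact (sup_le le_rfl (le_trans hkerP hPrad)) h2
  rw [Ideal.mem_radical_iff] at hradmem
  obtain ⟨m, hm⟩ := hradmem
  have hsc : t ^ m ∈ (pIdeal n p u).primeCompl := by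
    intro hmem
    exact htp (hpr.mem_of_pow_mem m hmem)
  have hsJ : rename Subtype.val (t ^ m) ∈ J := by rw [map_pow]; exact hm
  -- final
  apply le_antisymm
  · intro f hf
    have hzf : extMap n p u f ∈ Ideal.map (extMap n p u) I := hf
    obtain ⟨t', ht', a, haI, he⟩ := (mem_map_extMap_iff n p u I _).mp hzf
    rw [← map_mul] at he
    have h1 : f * rename Subtype.val t' = a := extMap_injective n p u he
    have h2 : f * rename Subtype.val t' ∈ Q := by
      rw [h1]
      exact (hI ▸ haI : a ∈ Q ⊓ J).1
    rcases (Ideal.isPrimary_iff.mp hQ).2 h2 with h | h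
    · exact h
    · exact absurd (hQrad ▸ (show rename Subtype.val t' ∈ Q.radical from h)) (hnotP t' ht')
  · intro f hf
    show extMap n p u f ∈ Ideal.map (extMap n p u) I
    refine (mem_map_extMap_iff n p u I _).mpr
      ⟨t ^ m, hsc, rename Subtype.val (t ^ m) * f, ?_, ?_⟩
    · rw [hI]
      exact ⟨Q.mul_mem_left _ hf, J.mul_mem_right _ hsJ⟩
    · rw [← map_mul, mul_comm]

end
end
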